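/- Let p ≥ 1, let β₀, δ ∈ ℝ^p, and let (ρ_n) be a sequence of nonnegative real numbers with ρ_n → ρ for some ρ ≥ 0. Then, as n → ∞, √(nρ_n(1 + ‖β₀ + δ/√n‖²)) − √(nρ_n(1 + ‖β₀‖²)) converges to √ρ · ⟨β₀, δ⟩ / √(1 + ‖β₀‖²). -/

import Mathlib

open Filter Real

private lemma sqrt_nat_tendsto_atTop :
    Filter.Tendsto (fun n : ℕ => Real.sqrt n) Filter.atTop Filter.atTop := by
  apply tendsto_atTop_atTop.2
  intro b
  refine ⟨⌈b ^ 2⌉₊, fun n hn => ?_⟩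
  have h1 : (b ^ 2 : ℝ) ≤ n := le_trans (Nat.le_ceil _) (by exact_mod_cast hn)
  calc b ≤ |b| := le_abs_self b
    _ = Real.sqrt (b ^ 2) := (Real.sqrt_sq_eq_abs b).symm
    _ ≤ Real.sqrt n := Real.sqrt_le_sqrt h1

/-- Limit of the rescaled square-root-ridge penalty difference:
`√(nρₙ(1 + ‖β₀ + δ/√n‖²)) − √(nρₙ(1 + ‖β₀‖²)) → √ρ·⟨β₀,δ⟩/√(1 + ‖β₀‖²)`. -/
theorem stmt_6 (p : ℕ) (hp : 1 ≤ p) (β₀ δ : Fin p → ℝ) (ρseq : ℕ → ℝ)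
    (hρseq : ∀ n, 0 ≤ ρseq n) (ρ : ℝ) (hρ : 0 ≤ ρ)
    (hlim : Filter.Tendsto ρseq Filter.atTop (nhds ρ)) :
    Filter.Tendsto (fun n : ℕ =>
        Real.sqrt ((n : ℝ) * ρseq n * (1 + ∑ i, (β₀ i + δ i / Real.sqrt n) ^ 2)) -
          Real.sqrt ((n : ℝ) * ρseq n * (1 + ∑ i, β₀ i ^ 2)))
      Filter.atTop
      (nhds (Real.sqrt ρ * (∑ i, β₀ i * δ i) / Real.sqrt (1 + ∑ i, β₀ i ^ 2))) := by
  set S : ℝ := ∑ i, β₀ i * δ i with hS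
  set D : ℝ := ∑ i, (δ i) ^ 2 with hD
  set b : ℝ := 1 + ∑ i, β₀ i ^ 2 with hb
  have hD0 : 0 ≤ D := Finset.sum_nonneg fun i _ => sq_nonneg _
  have hb1 : (1 : ℝ) ≤ b := le_add_of_nonneg_right (Finset.sum_nonneg fun i _ => sq_nonneg _)
  set a : ℕ → ℝ := fun n => 1 + ∑ i, (β₀ i + δ i / Real.sqrt n) ^ 2 with ha
  have ha1 : ∀ n, (1 : ℝ) ≤ a n := fun n =>
    le_add_of_nonneg_right (Finset.sum_nonneg fun i _ => sq_nonneg _)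
  -- key algebraic identity for a n
  have haeq : ∀ n : ℕ, a n = b + 2 * S / Real.sqrt n + D / n := by
    intro n
    have hsq : Real.sqrt n * Real.sqrt n = (n : ℝ) :=
      Real.mul_self_sqrt (Nat.cast_nonneg n)
    simp only [ha, hb, hS, hD]
    rcases eq_or_ne (n : ℝ) 0 with h0 | h0
    · have hs0 : Real.sqrt n = 0 := by rw [show (n:ℝ) = 0 from h0]; exact Real.sqrt_zero
      simp [hs0, h0]
    · have hs0 : Real.sqrt n ≠ 0 := fun h => h0 (by rw [← hsq, h, mul_zero])
      generalize hgen : Real.sqrt (n : ℝ) = s at hsq hs0 ⊢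
      rw [← hsq]
      have expand : ∀ i : Fin p, (β₀ i + δ i / s) ^ 2
          = β₀ i ^ 2 + 2 * (β₀ i * δ i) / s + (δ i) ^ 2 / (s * s) := by
        intro i; field_simp; ring
      rw [Finset.sum_congr rfl fun i _ => expand i]
      rw [Finset.sum_add_distrib, Finset.sum_add_distrib, ← Finset.sum_div, ← Finset.sum_div,
        ← Finset.mul_sum]
      ring
  have hatend : Tendsto a atTop (nhds b) := by
    have h1 : Tendsto (fun n : ℕ => 2 * S / Real.sqrt n) atTop (nhds 0) := by
      simpa [div_eq_mul_inv] using (sqrt_nat_tendsto_atTop.inv_tendsto_atTop).const_mul (2 * S)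
    have h2 : Tendsto (fun n : ℕ => D / (n : ℝ)) atTop (nhds 0) := by
      simpa [div_eq_mul_inv] using (tendsto_natCast_atTop_atTop (R := ℝ)).inv_tendsto_atTop.const_mul D
    have := ((tendsto_const_nhds (x := b)).add h1).add h2
    simp only [add_zero] at this
    exact Tendsto.congr (fun n => (haeq n).symm) this
  -- the rewritten sequence
  set g : ℕ → ℝ := fun n =>
    Real.sqrt (ρseq n) * (2 * S + D / Real.sqrt n) / (Real.sqrt (a n) + Real.sqrt b) with hg
  have hbpos : (0 : ℝ) < Real.sqrt b := Real.sqrt_pos.2 (by linarith)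
  -- limit of g
  have hgtend : Tendsto g atTop
      (nhds (Real.sqrt ρ * (2 * S + 0) / (Real.sqrt b + Real.sqrt b))) := by
    have h1 : Tendsto (fun n => Real.sqrt (ρseq n)) atTop (nhds (Real.sqrt ρ)) := hlim.sqrt
    have h2 : Tendsto (fun n : ℕ => D / Real.sqrt n) atTop (nhds 0) := by
      simpa [div_eq_mul_inv] using (sqrt_nat_tendsto_atTop.inv_tendsto_atTop).const_mul D
    have h3 : Tendsto (fun n => Real.sqrt (a n) + Real.sqrt b) atTop
        (nhds (Real.sqrt b + Real.sqrt b)) := hatend.sqrt.add tendsto_const_nhds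
    exact (h1.mul ((tendsto_const_nhds (x := 2 * S)).add h2)).div h3 (by positivity)
  have hval : Real.sqrt ρ * (2 * S + 0) / (Real.sqrt b + Real.sqrt b)
      = Real.sqrt ρ * S / Real.sqrt b := by
    rw [add_zero]
    field_simp
    ring
  rw [hval] at hgtend
  -- the original sequence eventually equals g
  refine Tendsto.congr' ?_ hgtend
  filter_upwards [eventually_ge_atTop 1] with n hn
  have hnpos : (0 : ℝ) < (n : ℝ) := by exact_mod_cast hn
  have hsn : (0 : ℝ) < Real.sqrt n := Real.sqrt_pos.2 hnpos
  have hsq : Real.sqrt n * Real.sqrt n = (n : ℝ) := Real.mul_self_sqrt (le_of_lt hnpos)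
  have hρn := hρseq n
  have hra : (0 : ℝ) ≤ a n := le_trans zero_le_one (ha1 n)
  have hrb : (0 : ℝ) ≤ b := le_trans zero_le_one hb1
  have hsa : (0 : ℝ) < Real.sqrt (a n) := Real.sqrt_pos.2 (lt_of_lt_of_le zero_lt_one (ha1 n))
  -- factor the square roots
  have e1 : Real.sqrt ((n : ℝ) * ρseq n * a n)
      = Real.sqrt (ρseq n) * (Real.sqrt n * Real.sqrt (a n)) := by
    rw [show (n : ℝ) * ρseq n * a n = ρseq n * ((n : ℝ) * a n) by ring,
      Real.sqrt_mul hρn, Real.sqrt_mul (le_of_lt hnpos)]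
  have e2 : Real.sqrt ((n : ℝ) * ρseq n * b)
      = Real.sqrt (ρseq n) * (Real.sqrt n * Real.sqrt b) := by
    rw [show (n : ℝ) * ρseq n * b = ρseq n * ((n : ℝ) * b) by ring,
      Real.sqrt_mul hρn, Real.sqrt_mul (le_of_lt hnpos)]
  have hdiff : (Real.sqrt (a n) - Real.sqrt b) * (Real.sqrt (a n) + Real.sqrt b)
      = a n - b := by
    have h1 : Real.sqrt (a n) * Real.sqrt (a n) = a n := Real.mul_self_sqrt hra
    have h2 : Real.sqrt b * Real.sqrt b = b := Real.mul_self_sqrt hrb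
    nlinarith [h1, h2]
  have hdenpos : (0 : ℝ) < Real.sqrt (a n) + Real.sqrt b := by linarith
  have hsub : Real.sqrt (a n) - Real.sqrt b = (a n - b) / (Real.sqrt (a n) + Real.sqrt b) :=
    (eq_div_iff (ne_of_gt hdenpos)).2 hdiff
  have hab : a n - b = 2 * S / Real.sqrt n + D / n := by rw [haeq n]; ring
  have hmain : Real.sqrt ((n : ℝ) * ρseq n * a n) - Real.sqrt ((n : ℝ) * ρseq n * b) = g n := by
    simp only [hg]
    rw [e1, e2, ← mul_sub, ← mul_sub, hsub, hab]
    have hs0 : Real.sqrt (n : ℝ) ≠ 0 := hsn.ne'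
    have hden : Real.sqrt (a n) + Real.sqrt b ≠ 0 := hdenpos.ne'
    generalize hgen : Real.sqrt (n : ℝ) = s at hsq hs0 ⊢
    rw [← hsq]
    field_simp
  exact hmain.symm
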